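/- Let n ≥ 1, let ψ and φ be positive semidefinite n×n complex matrices, and let α ∈ [1/2, 1). Then the infimum, over all n×n positive definite density matrices σ, of Tr[σ^{(α−1)/α} · ψ^{1/2} φ^{(1−α)/α} ψ^{1/2}] equals (Tr[(φ^{(1−α)/(2α)} ψ φ^{(1−α)/(2α)})^α])^{1/α}. (This identifies the Araki–Masuda variational expression for the sandwiched Rényi divergence of order α ∈ [1/2,1) with the closed trace formula, as in Theorem 2.4(ii) of the paper.) -/

import Mathlib

open Matrix
open scoped ComplexOrder

open Polynomial Filter Topology

/-- Real power of a matrix, defined via the spectral decomposition when the matrix is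
Hermitian (applying the real power function to the eigenvalues), and `0` otherwise. -/
noncomputable def mpow {n : ℕ} (A : Matrix (Fin n) (Fin n) ℂ) (r : ℝ) :
    Matrix (Fin n) (Fin n) ℂ :=
  if hA : A.IsHermitian then
    (hA.eigenvectorUnitary : Matrix (Fin n) (Fin n) ℂ) *
      Matrix.diagonal (fun i => ((hA.eigenvalues i ^ r : ℝ) : ℂ)) *
      (star hA.eigenvectorUnitary : Matrix (Fin n) (Fin n) ℂ)
  else 0

variable {n : ℕ}

lemma mpow_eq {A : Matrix (Fin n) (Fin n) ℂ} (hA : A.IsHermitian) (r : ℝ) :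
    mpow A r = (hA.eigenvectorUnitary : Matrix (Fin n) (Fin n) ℂ) *
      Matrix.diagonal (fun i => ((hA.eigenvalues i ^ r : ℝ) : ℂ)) *
      (star hA.eigenvectorUnitary : Matrix (Fin n) (Fin n) ℂ) :=
  dif_pos hA

lemma star_coe_mul_self (U : Matrix.unitaryGroup (Fin n) ℂ) :
    (star U : Matrix (Fin n) (Fin n) ℂ) * (U : Matrix (Fin n) (Fin n) ℂ) = 1 :=
  Unitary.coe_star_mul_self U

lemma uconj_isHermitian (U : Matrix.unitaryGroup (Fin n) ℂ) (d : Fin n → ℝ) :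
    ((U : Matrix (Fin n) (Fin n) ℂ) * Matrix.diagonal (fun i => ((d i : ℝ) : ℂ)) *
      (star U : Matrix (Fin n) (Fin n) ℂ)).IsHermitian := by
  have hd : (Matrix.diagonal (fun i => ((d i : ℝ) : ℂ)))ᴴ
      = Matrix.diagonal (fun i => ((d i : ℝ) : ℂ)) := by
    rw [Matrix.diagonal_conjTranspose]
    congr 1
    funext i
    simp [Pi.star_def, Complex.conj_ofReal]
  unfold Matrix.IsHermitian
  rw [Matrix.conjTranspose_mul, Matrix.conjTranspose_mul, hd, ← Matrix.star_eq_conjTranspose,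
    ← Matrix.star_eq_conjTranspose, star_star, Matrix.mul_assoc]

lemma uconj_posSemidef (U : Matrix.unitaryGroup (Fin n) ℂ) {d : Fin n → ℝ} (hd : ∀ i, 0 ≤ d i) :
    ((U : Matrix (Fin n) (Fin n) ℂ) * Matrix.diagonal (fun i => ((d i : ℝ) : ℂ)) *
      (star U : Matrix (Fin n) (Fin n) ℂ)).PosSemidef := by
  have h1 : (Matrix.diagonal (fun i => ((d i : ℝ) : ℂ))).PosSemidef :=
    Matrix.posSemidef_diagonal_iff.mpr fun i => by
      rw [Complex.zero_le_real]; exact hd i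
  have := h1.mul_mul_conjTranspose_same (U : Matrix (Fin n) (Fin n) ℂ)
  rwa [← Matrix.star_eq_conjTranspose] at this

lemma uconj_posDef (U : Matrix.unitaryGroup (Fin n) ℂ) {d : Fin n → ℝ} (hd : ∀ i, 0 < d i) :
    ((U : Matrix (Fin n) (Fin n) ℂ) * Matrix.diagonal (fun i => ((d i : ℝ) : ℂ)) *
      (star U : Matrix (Fin n) (Fin n) ℂ)).PosDef := by
  have hD : (Matrix.diagonal (fun i => ((d i : ℝ) : ℂ))).PosDef :=
    Matrix.PosDef.diagonal fun i => Complex.zero_lt_real.mpr (hd i)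
  refine Matrix.PosDef.of_dotProduct_mulVec_pos (uconj_isHermitian U d) fun x hx => ?_
  set y := (star U : Matrix (Fin n) (Fin n) ℂ) *ᵥ x with hy
  have hy0 : y ≠ 0 := by
    intro h0
    apply hx
    have hxy : (U : Matrix (Fin n) (Fin n) ℂ) *ᵥ y = x := by
      rw [hy, Matrix.mulVec_mulVec, Matrix.mem_unitaryGroup_iff.mp U.2, Matrix.one_mulVec]
    rw [h0, Matrix.mulVec_zero] at hxy
    exact hxy.symm
  have key : star x ⬝ᵥ (((U : Matrix (Fin n) (Fin n) ℂ) *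
        Matrix.diagonal (fun i => ((d i : ℝ) : ℂ)) *
        (star U : Matrix (Fin n) (Fin n) ℂ)) *ᵥ x)
      = star y ⬝ᵥ (Matrix.diagonal (fun i => ((d i : ℝ) : ℂ)) *ᵥ y) := by
    rw [← Matrix.mulVec_mulVec, ← Matrix.mulVec_mulVec, Matrix.dotProduct_mulVec (star x)]
    congr 1
    rw [hy, Matrix.star_mulVec, ← Matrix.star_eq_conjTranspose, star_star]
  rw [key]
  exact hD.dotProduct_mulVec_pos hy0

lemma trace_uconj (U : Matrix.unitaryGroup (Fin n) ℂ) (d : Fin n → ℂ) :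
    ((U : Matrix (Fin n) (Fin n) ℂ) * Matrix.diagonal d *
      (star U : Matrix (Fin n) (Fin n) ℂ)).trace = ∑ i, d i := by
  rw [Matrix.trace_mul_comm, ← Matrix.mul_assoc, Unitary.coe_star_mul_self, one_mul,
    Matrix.trace_diagonal]

lemma mpow_isHermitian {A : Matrix (Fin n) (Fin n) ℂ} (hA : A.IsHermitian) (r : ℝ) :
    (mpow A r).IsHermitian := by
  rw [mpow_eq hA]; exact uconj_isHermitian _ _

lemma mpow_posSemidef {A : Matrix (Fin n) (Fin n) ℂ} (hA : A.PosSemidef) (r : ℝ) :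
    (mpow A r).PosSemidef := by
  rw [mpow_eq hA.1]
  exact uconj_posSemidef _ fun i => Real.rpow_nonneg (hA.eigenvalues_nonneg i) r

lemma mpow_mul_mpow {A : Matrix (Fin n) (Fin n) ℂ} (hA : A.PosSemidef) {r t : ℝ}
    (hr : 0 < r) (ht : 0 < t) : mpow A r * mpow A t = mpow A (r + t) := by
  rw [mpow_eq hA.1, mpow_eq hA.1, mpow_eq hA.1]
  set U := hA.1.eigenvectorUnitary
  set e := hA.1.eigenvalues
  have h1 : ((U : Matrix (Fin n) (Fin n) ℂ) * Matrix.diagonal (fun i => ((e i ^ r : ℝ) : ℂ)) *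
        (star U : Matrix (Fin n) (Fin n) ℂ)) *
      ((U : Matrix (Fin n) (Fin n) ℂ) * Matrix.diagonal (fun i => ((e i ^ t : ℝ) : ℂ)) *
        (star U : Matrix (Fin n) (Fin n) ℂ))
      = (U : Matrix (Fin n) (Fin n) ℂ) *
        (Matrix.diagonal (fun i => ((e i ^ r : ℝ) : ℂ)) *
          ((star U : Matrix (Fin n) (Fin n) ℂ) * (U : Matrix (Fin n) (Fin n) ℂ)) *
          Matrix.diagonal (fun i => ((e i ^ t : ℝ) : ℂ))) *
        (star U : Matrix (Fin n) (Fin n) ℂ) := by noncomm_ring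
  rw [h1, star_coe_mul_self, mul_one, Matrix.diagonal_mul_diagonal]
  have h2 : (fun i => ((e i ^ r : ℝ) : ℂ) * ((e i ^ t : ℝ) : ℂ))
      = fun i => ((e i ^ (r + t) : ℝ) : ℂ) := by
    funext i
    rw [← Complex.ofReal_mul,
      ← Real.rpow_add' (hA.eigenvalues_nonneg i) (show r + t ≠ 0 by positivity)]
  rw [h2]

lemma mpow_one' {A : Matrix (Fin n) (Fin n) ℂ} (hA : A.IsHermitian) : mpow A 1 = A := by
  rw [mpow_eq hA]
  have h : (fun i => ((hA.eigenvalues i ^ (1:ℝ) : ℝ) : ℂ))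
      = RCLike.ofReal ∘ hA.eigenvalues := by
    funext i
    rw [Real.rpow_one]
    rfl
  rw [h]
  exact hA.spectral_theorem.symm

lemma trace_mpow_sum {A : Matrix (Fin n) (Fin n) ℂ} (hA : A.IsHermitian) (r : ℝ) :
    (mpow A r).trace = ((∑ i, hA.eigenvalues i ^ r : ℝ) : ℂ) := by
  rw [mpow_eq hA, trace_uconj]
  push_cast
  rfl

lemma coe_mul_star_self (U : Matrix.unitaryGroup (Fin n) ℂ) :
    (U : Matrix (Fin n) (Fin n) ℂ) * (star U : Matrix (Fin n) (Fin n) ℂ) = 1 :=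
  Matrix.mem_unitaryGroup_iff.mp U.2

lemma uconj_pow (U : Matrix.unitaryGroup (Fin n) ℂ) (D : Matrix (Fin n) (Fin n) ℂ) (k : ℕ) :
    ((U : Matrix (Fin n) (Fin n) ℂ) * D * (star U : Matrix (Fin n) (Fin n) ℂ)) ^ k
      = (U : Matrix (Fin n) (Fin n) ℂ) * D ^ k * (star U : Matrix (Fin n) (Fin n) ℂ) := by
  induction k with
  | zero => rw [pow_zero, pow_zero, mul_one, coe_mul_star_self]
  | succ k ih =>
      rw [pow_succ, ih, pow_succ]
      have h2 : (U : Matrix (Fin n) (Fin n) ℂ) * D ^ k * (star U : Matrix (Fin n) (Fin n) ℂ) *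
            ((U : Matrix (Fin n) (Fin n) ℂ) * D * (star U : Matrix (Fin n) (Fin n) ℂ))
          = (U : Matrix (Fin n) (Fin n) ℂ) * D ^ k *
            ((star U : Matrix (Fin n) (Fin n) ℂ) * (U : Matrix (Fin n) (Fin n) ℂ)) * D *
            (star U : Matrix (Fin n) (Fin n) ℂ) := by noncomm_ring
      rw [h2, star_coe_mul_self, mul_one]
      noncomm_ring

lemma aeval_unitary_conj (U : Matrix.unitaryGroup (Fin n) ℂ) (d : Fin n → ℂ) (p : ℂ[X]) :
    aeval ((U : Matrix (Fin n) (Fin n) ℂ) * Matrix.diagonal d *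
      (star U : Matrix (Fin n) (Fin n) ℂ)) p
      = (U : Matrix (Fin n) (Fin n) ℂ) * Matrix.diagonal (fun i => p.eval (d i)) *
        (star U : Matrix (Fin n) (Fin n) ℂ) := by
  induction p using Polynomial.induction_on' with
  | add p q hp hq =>
      simp only [map_add, hp, hq, eval_add]
      rw [show Matrix.diagonal (fun i => p.eval (d i) + q.eval (d i))
        = Matrix.diagonal (fun i => p.eval (d i)) + Matrix.diagonal fun i => q.eval (d i) from
        (Matrix.diagonal_add _ _).symm]
      noncomm_ring
  | monomial k a =>
      rw [aeval_monomial, uconj_pow, Matrix.diagonal_pow]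
      simp only [eval_monomial]
      have hd : (Matrix.diagonal fun i => a * d i ^ k)
          = a • Matrix.diagonal (d ^ k) := by
        rw [← Matrix.diagonal_smul]
        rfl
      rw [hd, Algebra.algebraMap_eq_smul_one]
      simp [smul_mul_assoc, mul_smul_comm]

/-- Well-definedness of the functional calculus. -/
lemma funcalc_eq {A : Matrix (Fin n) (Fin n) ℂ} (hA : A.IsHermitian)
    (U : Matrix.unitaryGroup (Fin n) ℂ) (d : Fin n → ℝ)
    (hAd : A = (U : Matrix (Fin n) (Fin n) ℂ) * Matrix.diagonal (fun i => (d i : ℂ)) *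
      (star U : Matrix (Fin n) (Fin n) ℂ)) (f : ℝ → ℝ) :
    (U : Matrix (Fin n) (Fin n) ℂ) * Matrix.diagonal (fun i => (f (d i) : ℂ)) *
      (star U : Matrix (Fin n) (Fin n) ℂ)
      = (hA.eigenvectorUnitary : Matrix (Fin n) (Fin n) ℂ) *
        Matrix.diagonal (fun i => (f (hA.eigenvalues i) : ℂ)) *
        (star hA.eigenvectorUnitary : Matrix (Fin n) (Fin n) ℂ) := by
  classical
  set s : Finset ℝ := Finset.univ.image d ∪ Finset.univ.image hA.eigenvalues with hs
  set p : ℝ[X] := Lagrange.interpolate s id f with hp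
  set q : ℂ[X] := p.map (algebraMap ℝ ℂ) with hqdef
  have hq : ∀ x : ℝ, x ∈ s → q.eval (x : ℂ) = ((f x : ℝ) : ℂ) := by
    intro x hx
    rw [hqdef, eval_map]
    rw [show ((x : ℂ)) = algebraMap ℝ ℂ x from rfl, eval₂_at_apply]
    rw [show eval x p = f x from Lagrange.eval_interpolate_at_node f (Set.injOn_id _) hx]
    rfl
  have key : ∀ (V : Matrix.unitaryGroup (Fin n) ℂ) (c : Fin n → ℝ), (∀ i, c i ∈ s) →
      A = (V : Matrix (Fin n) (Fin n) ℂ) * Matrix.diagonal (fun i => (c i : ℂ)) *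
        (star V : Matrix (Fin n) (Fin n) ℂ) →
      aeval A q = (V : Matrix (Fin n) (Fin n) ℂ) * Matrix.diagonal (fun i => (f (c i) : ℂ)) *
        (star V : Matrix (Fin n) (Fin n) ℂ) := by
    intro V c hc hAc
    rw [hAc, aeval_unitary_conj]
    have he : (fun i => q.eval ((c i : ℂ))) = fun i => ((f (c i) : ℝ) : ℂ) :=
      funext fun i => hq (c i) (hc i)
    rw [he]
  have h1 := key U d (fun i => Finset.mem_union_left _
    (Finset.mem_image_of_mem d (Finset.mem_univ i))) hAd
  have h2 := key hA.eigenvectorUnitary hA.eigenvalues (fun i => Finset.mem_union_right _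
    (Finset.mem_image_of_mem _ (Finset.mem_univ i))) hA.spectral_theorem
  rw [← h1, h2]

/-- `mpow` computed through an arbitrary unitary diagonalization. -/
lemma mpow_eq_conj {A : Matrix (Fin n) (Fin n) ℂ} (hA : A.IsHermitian)
    (U : Matrix.unitaryGroup (Fin n) ℂ) (d : Fin n → ℝ)
    (hAd : A = (U : Matrix (Fin n) (Fin n) ℂ) * Matrix.diagonal (fun i => (d i : ℂ)) *
      (star U : Matrix (Fin n) (Fin n) ℂ)) (r : ℝ) :
    mpow A r = (U : Matrix (Fin n) (Fin n) ℂ) *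
      Matrix.diagonal (fun i => ((d i ^ r : ℝ) : ℂ)) *
      (star U : Matrix (Fin n) (Fin n) ℂ) := by
  rw [mpow_eq hA]
  exact (funcalc_eq hA U d hAd (fun x => x ^ r)).symm

lemma mul_star_self_eq (z : ℂ) : z * star z = ((Complex.normSq z : ℝ) : ℂ) := by
  rw [Complex.star_def, Complex.mul_conj]

lemma trace_mul_entries (A B : Matrix (Fin n) (Fin n) ℂ) :
    (A * B).trace = ∑ j, ∑ i, A j i * B i j := by
  simp [Matrix.trace, Matrix.mul_apply, Matrix.diag]

lemma unitary_row_sum {W : Matrix (Fin n) (Fin n) ℂ} (hW : W ∈ Matrix.unitaryGroup (Fin n) ℂ)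
    (j : Fin n) : ∑ i, Complex.normSq (W j i) = 1 := by
  have h := Matrix.mem_unitaryGroup_iff.mp hW
  have h2 : (W * star W) j j = (1 : Matrix (Fin n) (Fin n) ℂ) j j := by rw [h]
  rw [Matrix.mul_apply, Matrix.one_apply_eq] at h2
  have h3 : ∑ i, W j i * (star W) i j = ((∑ i, Complex.normSq (W j i) : ℝ) : ℂ) := by
    push_cast
    refine Finset.sum_congr rfl fun i _ => ?_
    rw [Matrix.star_apply, mul_star_self_eq]
  rw [h3] at h2
  exact_mod_cast h2

lemma unitary_col_sum {W : Matrix (Fin n) (Fin n) ℂ} (hW : W ∈ Matrix.unitaryGroup (Fin n) ℂ)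
    (i : Fin n) : ∑ j, Complex.normSq (W j i) = 1 := by
  have h := Matrix.mem_unitaryGroup_iff'.mp hW
  have h2 : (star W * W) i i = (1 : Matrix (Fin n) (Fin n) ℂ) i i := by rw [h]
  rw [Matrix.mul_apply, Matrix.one_apply_eq] at h2
  have h3 : ∑ j, (star W) i j * W j i = ((∑ j, Complex.normSq (W j i) : ℝ) : ℂ) := by
    push_cast
    refine Finset.sum_congr rfl fun j _ => ?_
    rw [Matrix.star_apply, mul_comm, mul_star_self_eq]
  rw [h3] at h2
  exact_mod_cast h2

lemma trace_pair (U V : Matrix.unitaryGroup (Fin n) ℂ) (a b : Fin n → ℝ) :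
    (((U : Matrix (Fin n) (Fin n) ℂ) * Matrix.diagonal (fun i => ((a i : ℝ) : ℂ)) *
        (star U : Matrix (Fin n) (Fin n) ℂ)) *
      ((V : Matrix (Fin n) (Fin n) ℂ) * Matrix.diagonal (fun i => ((b i : ℝ) : ℂ)) *
        (star V : Matrix (Fin n) (Fin n) ℂ))).trace
      = ((∑ j, ∑ i, a j * b i *
          Complex.normSq (((star U : Matrix (Fin n) (Fin n) ℂ) * (V : Matrix (Fin n) (Fin n) ℂ)) j i)
          : ℝ) : ℂ) := by
  set W : Matrix (Fin n) (Fin n) ℂ :=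
    (star U : Matrix (Fin n) (Fin n) ℂ) * (V : Matrix (Fin n) (Fin n) ℂ) with hW
  set Da := Matrix.diagonal (fun i => ((a i : ℝ) : ℂ)) with hDa
  set Db := Matrix.diagonal (fun i => ((b i : ℝ) : ℂ)) with hDb
  have hsW : star W = (star V : Matrix (Fin n) (Fin n) ℂ) * (U : Matrix (Fin n) (Fin n) ℂ) := by
    rw [hW, StarMul.star_mul, star_star]
  have h1 : ((U : Matrix (Fin n) (Fin n) ℂ) * Da * (star U : Matrix (Fin n) (Fin n) ℂ)) *
      ((V : Matrix (Fin n) (Fin n) ℂ) * Db * (star V : Matrix (Fin n) (Fin n) ℂ))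
      = (U : Matrix (Fin n) (Fin n) ℂ) * (Da * W * Db * star W) *
        (star U : Matrix (Fin n) (Fin n) ℂ) := by
    rw [hsW, hW]
    have h2 : (U : Matrix (Fin n) (Fin n) ℂ) *
        (Da * ((star U : Matrix (Fin n) (Fin n) ℂ) * (V : Matrix (Fin n) (Fin n) ℂ)) * Db *
          ((star V : Matrix (Fin n) (Fin n) ℂ) * (U : Matrix (Fin n) (Fin n) ℂ))) *
        (star U : Matrix (Fin n) (Fin n) ℂ)
        = ((U : Matrix (Fin n) (Fin n) ℂ) * Da * (star U : Matrix (Fin n) (Fin n) ℂ)) *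
          ((V : Matrix (Fin n) (Fin n) ℂ) * Db * (star V : Matrix (Fin n) (Fin n) ℂ)) *
          ((U : Matrix (Fin n) (Fin n) ℂ) * (star U : Matrix (Fin n) (Fin n) ℂ)) := by
      noncomm_ring
    rw [h2, Matrix.mem_unitaryGroup_iff.mp U.2, mul_one]
  rw [h1, Matrix.trace_mul_comm, ← Matrix.mul_assoc, Unitary.coe_star_mul_self, one_mul]
  rw [trace_mul_entries]
  push_cast
  refine Finset.sum_congr rfl fun j _ => Finset.sum_congr rfl fun i _ => ?_
  have hentry : (Da * W * Db) j i = (a j : ℂ) * W j i * (b i : ℂ) := by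
    rw [hDb, Matrix.mul_diagonal, hDa, Matrix.diagonal_mul]
  rw [Matrix.star_apply, hentry]
  rw [show (a j : ℂ) * W j i * (b i : ℂ) * star (W j i)
      = (a j : ℂ) * (b i : ℂ) * (W j i * star (W j i)) from by ring, mul_star_self_eq]

lemma pow_conjTranspose_mul (X : Matrix (Fin n) (Fin n) ℂ) (k : ℕ) :
    (Xᴴ * X) ^ (k + 1) = Xᴴ * (X * Xᴴ) ^ k * X := by
  induction k with
  | zero => rw [pow_one, pow_zero, mul_one]
  | succ k ih =>
      rw [pow_succ, ih, pow_succ]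
      noncomm_ring

lemma trace_pow_comm (X : Matrix (Fin n) (Fin n) ℂ) (k : ℕ) :
    ((Xᴴ * X) ^ k).trace = ((X * Xᴴ) ^ k).trace := by
  cases k with
  | zero => rw [pow_zero, pow_zero]
  | succ k =>
      rw [pow_conjTranspose_mul, Matrix.trace_mul_comm]
      congr 1
      rw [← Matrix.mul_assoc, ← pow_succ']

lemma trace_aeval_comm (X : Matrix (Fin n) (Fin n) ℂ) (q : ℂ[X]) :
    (aeval (Xᴴ * X) q).trace = (aeval (X * Xᴴ) q).trace := by
  rw [aeval_eq_sum_range, aeval_eq_sum_range]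
  rw [Matrix.trace_sum, Matrix.trace_sum]
  refine Finset.sum_congr rfl fun k _ => ?_
  rw [Matrix.trace_smul, Matrix.trace_smul, trace_pow_comm]

lemma mpow_eq_aeval {A : Matrix (Fin n) (Fin n) ℂ} (hA : A.IsHermitian) (r : ℝ) (q : ℂ[X])
    (hq : ∀ i, q.eval ((hA.eigenvalues i : ℝ) : ℂ) = ((hA.eigenvalues i ^ r : ℝ) : ℂ)) :
    mpow A r = aeval A q := by
  conv_rhs => rw [hA.spectral_theorem, Unitary.conjStarAlgAut_apply]
  rw [aeval_unitary_conj, mpow_eq hA]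
  have h : (fun i => q.eval ((RCLike.ofReal ∘ hA.eigenvalues) i))
      = fun i => ((hA.eigenvalues i ^ r : ℝ) : ℂ) := funext fun i => hq i
  rw [h]

lemma interp_eval (s : Finset ℝ) (f : ℝ → ℝ) {x : ℝ} (hx : x ∈ s) :
    ((Lagrange.interpolate s id f).map (algebraMap ℝ ℂ)).eval ((x : ℝ) : ℂ)
      = ((f x : ℝ) : ℂ) := by
  rw [eval_map, show ((x : ℂ)) = algebraMap ℝ ℂ x from rfl, eval₂_at_apply,
    show eval x (Lagrange.interpolate s id f) = f x from
      Lagrange.eval_interpolate_at_node f (Set.injOn_id _) hx]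
  rfl

lemma trace_mpow_comm (X : Matrix (Fin n) (Fin n) ℂ) (r : ℝ) :
    (mpow (Xᴴ * X) r).trace = (mpow (X * Xᴴ) r).trace := by
  classical
  have hM := Matrix.posSemidef_conjTranspose_mul_self X
  have hN := Matrix.posSemidef_self_mul_conjTranspose X
  set s : Finset ℝ := Finset.univ.image hM.1.eigenvalues ∪ Finset.univ.image hN.1.eigenvalues
    with hs
  set q : Polynomial ℂ := (Lagrange.interpolate s id (fun x => x ^ r)).map (algebraMap ℝ ℂ)
    with hq
  have h1 : mpow (Xᴴ * X) r = aeval (Xᴴ * X) q :=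
    mpow_eq_aeval hM.1 r q fun i => interp_eval s _ (Finset.mem_union_left _
      (Finset.mem_image_of_mem _ (Finset.mem_univ i)))
  have h2 : mpow (X * Xᴴ) r = aeval (X * Xᴴ) q :=
    mpow_eq_aeval hN.1 r q fun i => interp_eval s _ (Finset.mem_union_right _
      (Finset.mem_image_of_mem _ (Finset.mem_univ i)))
  rw [h1, h2, trace_aeval_comm]

lemma uconj_mul_uconj (U : Matrix.unitaryGroup (Fin n) ℂ) (a b : Fin n → ℂ) :
    ((U : Matrix (Fin n) (Fin n) ℂ) * Matrix.diagonal a * (star U : Matrix (Fin n) (Fin n) ℂ)) *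
      ((U : Matrix (Fin n) (Fin n) ℂ) * Matrix.diagonal b *
        (star U : Matrix (Fin n) (Fin n) ℂ))
      = (U : Matrix (Fin n) (Fin n) ℂ) * Matrix.diagonal (a * b) *
        (star U : Matrix (Fin n) (Fin n) ℂ) := by
  have h1 : ((U : Matrix (Fin n) (Fin n) ℂ) * Matrix.diagonal a *
        (star U : Matrix (Fin n) (Fin n) ℂ)) *
      ((U : Matrix (Fin n) (Fin n) ℂ) * Matrix.diagonal b *
        (star U : Matrix (Fin n) (Fin n) ℂ))
      = (U : Matrix (Fin n) (Fin n) ℂ) *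
        (Matrix.diagonal a *
          ((star U : Matrix (Fin n) (Fin n) ℂ) * (U : Matrix (Fin n) (Fin n) ℂ)) *
          Matrix.diagonal b) *
        (star U : Matrix (Fin n) (Fin n) ℂ) := by noncomm_ring
  rw [h1, star_coe_mul_self, mul_one, Matrix.diagonal_mul_diagonal]
  rfl

/-- The key lower bound, by a single application of Hölder's inequality. -/
lemma lower_bound {M σ : Matrix (Fin n) (Fin n) ℂ} (hM : M.PosSemidef) (hσ : σ.PosDef)
    (hσtr : σ.trace = 1) {α β : ℝ} (hα0 : 0 < α) (hα2 : α < 1) (hβ : β = (1 - α) / α) :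
    (∑ i, hM.1.eigenvalues i ^ α) ^ (1 / α) ≤ ((mpow σ (-β) * M).trace).re := by
  classical
  have hβ0 : 0 < β := hβ ▸ div_pos (by linarith) hα0
  set U := hσ.isHermitian.eigenvectorUnitary with hU
  set V := hM.1.eigenvectorUnitary with hV
  set s : Fin n → ℝ := hσ.isHermitian.eigenvalues with hsdef
  set e : Fin n → ℝ := hM.1.eigenvalues with hedef
  have hs : ∀ j, 0 < s j := fun j => hσ.eigenvalues_pos j
  have he : ∀ i, 0 ≤ e i := fun i => hM.eigenvalues_nonneg i
  set W : Matrix (Fin n) (Fin n) ℂ :=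
    (star U : Matrix (Fin n) (Fin n) ℂ) * (V : Matrix (Fin n) (Fin n) ℂ) with hWdef
  have hWmem : W ∈ Matrix.unitaryGroup (Fin n) ℂ := mul_mem (Unitary.star_mem U.2) V.2
  set D : Fin n → Fin n → ℝ := fun j i => Complex.normSq (W j i) with hDdef
  have hD : ∀ j i, 0 ≤ D j i := fun j i => Complex.normSq_nonneg _
  have hrow : ∀ j, ∑ i, D j i = 1 := fun j => unitary_row_sum hWmem j
  have hcol : ∀ i, ∑ j, D j i = 1 := fun i => unitary_col_sum hWmem i
  -- the trace as a real double sum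
  have hMdec : M = (V : Matrix (Fin n) (Fin n) ℂ) *
      Matrix.diagonal (fun i => ((e i : ℝ) : ℂ)) * (star V : Matrix (Fin n) (Fin n) ℂ) :=
    hM.1.spectral_theorem
  have htr : ((mpow σ (-β) * M).trace).re = ∑ j, ∑ i, s j ^ (-β) * e i * D j i := by
    rw [mpow_eq hσ.isHermitian]
    conv_lhs => rw [hMdec]
    rw [trace_pair U V (fun j => s j ^ (-β)) e, Complex.ofReal_re]
  rw [htr]
  -- sum of eigenvalues of σ is 1
  have hssum : ∑ j, s j = 1 := by
    have h1 : σ.trace = ((∑ j, s j : ℝ) : ℂ) := by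
      conv_lhs => rw [hσ.isHermitian.spectral_theorem, Unitary.conjStarAlgAut_apply]
      rw [trace_uconj]
      push_cast
      rfl
    rw [hσtr] at h1
    exact_mod_cast h1.symm
  -- Hölder setup
  set x : ℝ := ∑ j, ∑ i, s j ^ (-β) * e i * D j i with hxdef
  have hx0 : 0 ≤ x :=
    Finset.sum_nonneg fun j _ => Finset.sum_nonneg fun i _ =>
      mul_nonneg (mul_nonneg (Real.rpow_nonneg (hs j).le _) (he i)) (hD j i)
  set f : Fin n × Fin n → ℝ := fun p => (D p.1 p.2 * s p.1 ^ (-β) * e p.2) ^ α with hfdef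
  set g : Fin n × Fin n → ℝ := fun p => (D p.1 p.2 * s p.1) ^ (1 - α) with hgdef
  have hfg : ∀ p : Fin n × Fin n, f p * g p = D p.1 p.2 * e p.2 ^ α := by
    intro p
    simp only [hfdef, hgdef]
    rw [Real.mul_rpow (mul_nonneg (hD _ _) (Real.rpow_nonneg (hs p.1).le _)) (he p.2),
      Real.mul_rpow (hD _ _) (Real.rpow_nonneg (hs p.1).le _),
      Real.mul_rpow (hD _ _) (hs p.1).le]
    have h1 : D p.1 p.2 ^ α * D p.1 p.2 ^ (1 - α) = D p.1 p.2 := by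
      rw [← Real.rpow_add' (hD _ _) (show α + (1 - α) ≠ 0 by norm_num),
        show α + (1 - α) = 1 by ring, Real.rpow_one]
    have h2 : (s p.1 ^ (-β)) ^ α * s p.1 ^ (1 - α) = 1 := by
      rw [← Real.rpow_mul (hs p.1).le, ← Real.rpow_add (hs p.1),
        show -β * α + (1 - α) = 0 by rw [hβ]; field_simp; ring, Real.rpow_zero]
    calc D p.1 p.2 ^ α * (s p.1 ^ (-β)) ^ α * e p.2 ^ α * (D p.1 p.2 ^ (1 - α) * s p.1 ^ (1 - α))
        = (D p.1 p.2 ^ α * D p.1 p.2 ^ (1 - α)) * ((s p.1 ^ (-β)) ^ α * s p.1 ^ (1 - α)) *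
          e p.2 ^ α := by ring
      _ = D p.1 p.2 * e p.2 ^ α := by rw [h1, h2]; ring
  have hfinv : ∀ p : Fin n × Fin n, f p ^ α⁻¹ = D p.1 p.2 * s p.1 ^ (-β) * e p.2 := by
    intro p
    simp only [hfdef]
    rw [← Real.rpow_mul (mul_nonneg (mul_nonneg (hD _ _) (Real.rpow_nonneg (hs p.1).le _))
      (he p.2)), mul_inv_cancel₀ hα0.ne', Real.rpow_one]
  have hginv : ∀ p : Fin n × Fin n, g p ^ (1 - α)⁻¹ = D p.1 p.2 * s p.1 := by
    intro p
    simp only [hgdef]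
    rw [← Real.rpow_mul (mul_nonneg (hD _ _) (hs p.1).le),
      mul_inv_cancel₀ (by linarith : (1:ℝ) - α ≠ 0), Real.rpow_one]
  have hT : ∑ p : Fin n × Fin n, f p * g p = ∑ i, e i ^ α := by
    simp_rw [hfg]
    rw [Fintype.sum_prod_type]
    show ∑ j, ∑ i, D j i * e i ^ α = ∑ i, e i ^ α
    rw [Finset.sum_comm]
    refine Finset.sum_congr rfl fun i _ => ?_
    rw [← Finset.sum_mul, hcol i, one_mul]
  have hFx : ∑ p : Fin n × Fin n, f p ^ α⁻¹ = x := by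
    simp_rw [hfinv]
    rw [Fintype.sum_prod_type]
    show ∑ j, ∑ i, D j i * s j ^ (-β) * e i = x
    rw [hxdef]
    refine Finset.sum_congr rfl fun j _ => Finset.sum_congr rfl fun i _ => by ring
  have hG1 : ∑ p : Fin n × Fin n, g p ^ (1 - α)⁻¹ = 1 := by
    simp_rw [hginv]
    rw [Fintype.sum_prod_type]
    show ∑ j, ∑ i, D j i * s j = 1
    calc ∑ j, ∑ _i : Fin n, D j _i * s j = ∑ j, s j := by
          refine Finset.sum_congr rfl fun j _ => ?_
          rw [← Finset.sum_mul, hrow j, one_mul]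
      _ = 1 := hssum
  have hpq : (α⁻¹).HolderConjugate (1 - α)⁻¹ := Real.HolderConjugate.inv_one_sub_inv hα0 hα2
  have holder := Real.inner_le_Lp_mul_Lq_of_nonneg (s := Finset.univ) (f := f) (g := g) hpq
    (fun p _ => Real.rpow_nonneg (mul_nonneg (mul_nonneg (hD _ _)
      (Real.rpow_nonneg (hs _).le _)) (he _)) _)
    (fun p _ => Real.rpow_nonneg (mul_nonneg (hD _ _) (hs _).le) _)
  rw [hT, hFx, hG1] at holder
  have h1α : (1 : ℝ) / α⁻¹ = α := by rw [one_div, inv_inv]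
  rw [h1α, Real.one_rpow, mul_one] at holder
  -- conclude
  calc (∑ i, e i ^ α) ^ (1 / α) ≤ (x ^ α) ^ (1 / α) := by
        refine Real.rpow_le_rpow ?_ holder (by positivity)
        exact Finset.sum_nonneg fun i _ => Real.rpow_nonneg (he i) _
    _ = x := by
        rw [← Real.rpow_mul hx0, mul_one_div, div_self hα0.ne', Real.rpow_one]

open Filter Topology

/-- Scalar limit computation for the approximating sequence. -/
lemma tendsto_approx {e : Fin n → ℝ} (he : ∀ i, 0 ≤ e i) {α β : ℝ} (hα0 : 0 < α)
    (hα2 : α < 1) (hβ : β = (1 - α) / α) :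
    Tendsto (fun ε : ℝ => ∑ i, ((e i ^ α + ε) / ((∑ k, e k ^ α) + n * ε)) ^ (-β) * e i)
      (nhdsWithin 0 (Set.Ioi 0)) (nhds ((∑ i, e i ^ α) ^ (1 / α))) := by
  have hT0 : 0 ≤ ∑ k, e k ^ α := Finset.sum_nonneg fun k _ => Real.rpow_nonneg (he k) α
  rcases eq_or_lt_of_le hT0 with hT | hT
  · -- all eigenvalues vanish
    have hei : ∀ i, e i = 0 := by
      intro i
      by_contra h
      have h1 : 0 < e i := (he i).lt_of_ne (Ne.symm h)
      have h2 : 0 < e i ^ α := Real.rpow_pos_of_pos h1 α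
      have h3 : e i ^ α ≤ ∑ k, e k ^ α :=
        Finset.single_le_sum (fun k _ => Real.rpow_nonneg (he k) α) (Finset.mem_univ i)
      linarith [hT.symm ▸ lt_of_lt_of_le h2 h3]
    have hfun : (fun ε : ℝ => ∑ i, ((e i ^ α + ε) / ((∑ k, e k ^ α) + n * ε)) ^ (-β) * e i)
        = fun _ => 0 :=
      funext fun ε => Finset.sum_eq_zero fun i _ => by rw [hei i, mul_zero]
    rw [hfun, ← hT, Real.zero_rpow (one_div_ne_zero hα0.ne')]
    exact tendsto_const_nhds
  · set T := ∑ k, e k ^ α with hTdef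
    have hβ1α : β + 1 = 1 / α := by rw [hβ]; field_simp; ring
    have hsum : ∑ i, T ^ β * e i ^ α = T ^ (1 / α) := by
      rw [← Finset.mul_sum, ← hTdef, ← Real.rpow_add_one hT.ne', hβ1α]
    rw [← hsum]
    apply tendsto_finset_sum
    intro i _
    by_cases hei : e i = 0
    · simpa [hei, Real.zero_rpow hα0.ne'] using
        (tendsto_const_nhds : Tendsto (fun _ : ℝ => (0:ℝ)) _ _)
    · have he' : 0 < e i := (he i).lt_of_ne (Ne.symm hei)
      have hcont1 : ContinuousAt (fun ε : ℝ => (e i ^ α + ε) / (T + n * ε)) 0 := by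
        apply ContinuousAt.div
        · exact (continuous_const.add continuous_id).continuousAt
        · exact (continuous_const.add (continuous_const.mul continuous_id)).continuousAt
        · simpa using hT.ne'
      have hb : (0:ℝ) < (e i ^ α + 0) / (T + n * 0) := by
        have : (e i ^ α + 0) / (T + n * 0) = e i ^ α / T := by norm_num
        rw [this]
        exact div_pos (Real.rpow_pos_of_pos he' α) hT
      have hcont2 : ContinuousAt (fun y : ℝ => y ^ (-β)) ((e i ^ α + 0) / (T + n * 0)) :=
        Real.continuousAt_rpow_const _ _ (Or.inl hb.ne')
      have hcomp : ContinuousAt (fun ε : ℝ => ((e i ^ α + ε) / (T + n * ε)) ^ (-β)) 0 :=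
        ContinuousAt.comp (g := fun y : ℝ => y ^ (-β))
          (f := fun ε : ℝ => (e i ^ α + ε) / (T + n * ε)) hcont2 hcont1
      have hcont : ContinuousAt (fun ε : ℝ => ((e i ^ α + ε) / (T + n * ε)) ^ (-β) * e i) 0 :=
        hcomp.mul continuousAt_const
      have hv : ((e i ^ α + 0) / (T + n * 0)) ^ (-β) * e i = T ^ β * e i ^ α := by
        rw [add_zero, mul_zero, add_zero]
        rw [Real.div_rpow (Real.rpow_nonneg (he i) α) hT.le, Real.rpow_neg hT.le, div_eq_mul_inv, inv_inv]
        rw [← Real.rpow_mul (he i)]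
        calc e i ^ (α * -β) * T ^ β * e i = T ^ β * (e i ^ (α * -β) * e i ^ (1:ℝ)) := by
              rw [Real.rpow_one]; ring
          _ = T ^ β * e i ^ (α * -β + 1) := by rw [← Real.rpow_add he']
          _ = T ^ β * e i ^ α := by
              congr 1
              rw [hβ]
              field_simp
              ring
      have h5 : Tendsto (fun ε : ℝ => ((e i ^ α + ε) / (T + n * ε)) ^ (-β) * e i) (𝓝 0)
          (𝓝 (T ^ β * e i ^ α)) := by
        rw [← hv]
        exact hcont.tendsto
      exact h5.mono_left nhdsWithin_le_nhds

/-- Construction of the approximating density matrix and the value of the functional at it. -/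
lemma approx_mem {M : Matrix (Fin n) (Fin n) ℂ} (hM : M.PosSemidef) (hn : 1 ≤ n)
    {α β ε : ℝ} (hα0 : 0 < α) (hβ0 : 0 < β) (hε : 0 < ε) :
    ∃ σ : Matrix (Fin n) (Fin n) ℂ, σ.PosDef ∧ σ.trace = 1 ∧
      ((mpow σ (-β) * M).trace).re
        = ∑ i, ((hM.1.eigenvalues i ^ α + ε) / ((∑ k, hM.1.eigenvalues k ^ α) + n * ε)) ^ (-β)
            * hM.1.eigenvalues i := by
  classical
  set V := hM.1.eigenvectorUnitary with hV
  set e : Fin n → ℝ := hM.1.eigenvalues with hedef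
  have he : ∀ i, 0 ≤ e i := fun i => hM.eigenvalues_nonneg i
  have hn' : (0:ℝ) < n := by
    have : (1:ℝ) ≤ n := by exact_mod_cast hn
    linarith
  have hT0 : 0 ≤ ∑ k, e k ^ α := Finset.sum_nonneg fun k _ => Real.rpow_nonneg (he k) α
  set Z : ℝ := (∑ k, e k ^ α) + n * ε with hZdef
  have hZ : 0 < Z := by
    have : 0 < (n:ℝ) * ε := mul_pos hn' hε
    rw [hZdef]; linarith
  set w : Fin n → ℝ := fun i => (e i ^ α + ε) / Z with hwdef
  have hw : ∀ i, 0 < w i := fun i =>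
    div_pos (add_pos_of_nonneg_of_pos (Real.rpow_nonneg (he i) α) hε) hZ
  refine ⟨(V : Matrix (Fin n) (Fin n) ℂ) * Matrix.diagonal (fun i => ((w i : ℝ) : ℂ)) *
    (star V : Matrix (Fin n) (Fin n) ℂ), uconj_posDef V hw, ?_, ?_⟩
  · rw [trace_uconj]
    have h1 : ∑ i, ((w i : ℝ) : ℂ) = ((∑ i, w i : ℝ) : ℂ) := by push_cast; rfl
    have h2 : ∑ i, w i = 1 := by
      rw [hwdef]
      simp only []
      rw [← Finset.sum_div]
      rw [Finset.sum_add_distrib, Finset.sum_const, Finset.card_univ, Fintype.card_fin,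
        nsmul_eq_mul, ← hZdef, div_self hZ.ne']
    rw [h1, h2, Complex.ofReal_one]
  · have hmp : mpow ((V : Matrix (Fin n) (Fin n) ℂ) *
        Matrix.diagonal (fun i => ((w i : ℝ) : ℂ)) * (star V : Matrix (Fin n) (Fin n) ℂ)) (-β)
        = (V : Matrix (Fin n) (Fin n) ℂ) * Matrix.diagonal (fun i => ((w i ^ (-β) : ℝ) : ℂ)) *
          (star V : Matrix (Fin n) (Fin n) ℂ) :=
      mpow_eq_conj (uconj_isHermitian V w) V w rfl (-β)
    have hMdec : M = (V : Matrix (Fin n) (Fin n) ℂ) *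
        Matrix.diagonal (fun i => ((e i : ℝ) : ℂ)) * (star V : Matrix (Fin n) (Fin n) ℂ) :=
      hM.1.spectral_theorem
    rw [hmp]
    conv_lhs => rw [hMdec]
    rw [uconj_mul_uconj, trace_uconj]
    have h3 : ∑ i, ((fun i => ((w i ^ (-β) : ℝ) : ℂ)) * fun i => ((e i : ℝ) : ℂ)) i
        = ((∑ i, w i ^ (-β) * e i : ℝ) : ℂ) := by
      push_cast
      rfl
    rw [h3, Complex.ofReal_re]

theorem araki_masuda_variational_inf {n : ℕ} (hn : 1 ≤ n)
    (ψ φ : Matrix (Fin n) (Fin n) ℂ) (hψ : ψ.PosSemidef) (hφ : φ.PosSemidef)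
    (α : ℝ) (hα₁ : 1 / 2 ≤ α) (hα₂ : α < 1) :
    sInf {x : ℝ | ∃ σ : Matrix (Fin n) (Fin n) ℂ, σ.PosDef ∧ σ.trace = 1 ∧
        x = (Matrix.trace (mpow σ ((α - 1) / α) *
          (mpow ψ (1 / 2) * mpow φ ((1 - α) / α) * mpow ψ (1 / 2)))).re} =
      ((Matrix.trace (mpow (mpow φ ((1 - α) / (2 * α)) * ψ * mpow φ ((1 - α) / (2 * α))) α)).re)
        ^ (1 / α) := by
  classical
  have hα0 : 0 < α := lt_of_lt_of_le one_half_pos hα₁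
  rw [show (α - 1) / α = -((1 - α) / α) from by ring,
    show (1 - α) / (2 * α) = ((1 - α) / α) / 2 from by ring]
  set β : ℝ := (1 - α) / α with hβdef
  have hβ : 0 < β := hβdef ▸ div_pos (by linarith) hα0
  set X := mpow φ (β / 2) * mpow ψ (1 / 2) with hXdef
  have hPh : (mpow ψ (1/2 : ℝ)).IsHermitian := mpow_isHermitian hψ.1 _
  have hQh : (mpow φ (β / 2)).IsHermitian := mpow_isHermitian hφ.1 _
  have hXct : Xᴴ = mpow ψ (1/2) * mpow φ (β / 2) := by
    rw [hXdef, Matrix.conjTranspose_mul, hPh, hQh]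
  have hMform : mpow ψ (1/2) * mpow φ β * mpow ψ (1/2) = Xᴴ * X := by
    rw [hXct, hXdef]
    have hQQ : mpow φ (β / 2) * mpow φ (β / 2) = mpow φ β := by
      have h := mpow_mul_mpow hφ (half_pos hβ) (half_pos hβ)
      rwa [show β / 2 + β / 2 = β from by ring] at h
    rw [← hQQ]
    noncomm_ring
  have hNform : mpow φ (β / 2) * ψ * mpow φ (β / 2) = X * Xᴴ := by
    rw [hXct, hXdef]
    have hPP : mpow ψ (1/2 : ℝ) * mpow ψ (1/2 : ℝ) = ψ := by
      have h := mpow_mul_mpow hψ (by norm_num : (0:ℝ) < 1/2) (by norm_num : (0:ℝ) < 1/2)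
      rw [show (1/2 + 1/2 : ℝ) = 1 from by norm_num] at h
      rw [h, mpow_one' hψ.1]
    calc mpow φ (β / 2) * ψ * mpow φ (β / 2)
        = mpow φ (β / 2) * (mpow ψ (1/2 : ℝ) * mpow ψ (1/2 : ℝ)) * mpow φ (β / 2) := by
          rw [hPP]
      _ = mpow φ (β / 2) * mpow ψ (1/2) * (mpow ψ (1/2) * mpow φ (β / 2)) := by
          noncomm_ring
  rw [hMform, hNform]
  have hM : (Xᴴ * X).PosSemidef := Matrix.posSemidef_conjTranspose_mul_self X
  have hTre : ((mpow (X * Xᴴ) α).trace).re = ∑ i, hM.1.eigenvalues i ^ α := by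
    rw [← trace_mpow_comm X α, trace_mpow_sum hM.1, Complex.ofReal_re]
  rw [hTre]
  have hT0 : 0 ≤ ∑ i, hM.1.eigenvalues i ^ α :=
    Finset.sum_nonneg fun i _ => Real.rpow_nonneg (hM.eigenvalues_nonneg i) α
  -- lower bound for every element of the set
  have hlow : ∀ y ∈ {x : ℝ | ∃ σ : Matrix (Fin n) (Fin n) ℂ, σ.PosDef ∧ σ.trace = 1 ∧
      x = ((mpow σ (-β) * (Xᴴ * X)).trace).re},
      (∑ i, hM.1.eigenvalues i ^ α) ^ (1 / α) ≤ y := by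
    rintro y ⟨σ, h1, h2, rfl⟩
    exact lower_bound hM h1 h2 hα0 hα₂ hβdef
  have hbdd : BddBelow {x : ℝ | ∃ σ : Matrix (Fin n) (Fin n) ℂ, σ.PosDef ∧ σ.trace = 1 ∧
      x = ((mpow σ (-β) * (Xᴴ * X)).trace).re} :=
    ⟨(∑ i, hM.1.eigenvalues i ^ α) ^ (1 / α), hlow⟩
  -- members approximating the claimed infimum
  have hmem : ∀ ε : ℝ, 0 < ε →
      (∑ i, ((hM.1.eigenvalues i ^ α + ε) / ((∑ k, hM.1.eigenvalues k ^ α) + n * ε)) ^ (-β)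
        * hM.1.eigenvalues i) ∈
      {x : ℝ | ∃ σ : Matrix (Fin n) (Fin n) ℂ, σ.PosDef ∧ σ.trace = 1 ∧
        x = ((mpow σ (-β) * (Xᴴ * X)).trace).re} := by
    intro ε hε
    obtain ⟨σ, h1, h2, h3⟩ := approx_mem hM hn (α := α) hα0 hβ hε
    exact ⟨σ, h1, h2, h3.symm⟩
  refine le_antisymm ?_ (le_csInf ⟨_, hmem 1 one_pos⟩ hlow)
  refine le_of_forall_pos_le_add fun δ hδ => ?_
  have htt := tendsto_approx (fun i => hM.eigenvalues_nonneg i) hα0 hα₂ hβdef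
  have hev := (htt.eventually_lt_const
    (show (∑ i, hM.1.eigenvalues i ^ α) ^ (1 / α)
      < (∑ i, hM.1.eigenvalues i ^ α) ^ (1 / α) + δ from by linarith)).and
    eventually_mem_nhdsWithin
  obtain ⟨ε, hlt, hε⟩ := hev.exists
  exact (csInf_le hbdd (hmem ε hε)).trans hlt.le
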